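/- Let AS₁ and AS₂ be syntactically disjoint argumentation systems with union AS₊, and suppose a ∈ 𝒜_i attacks b ∈ 𝒜_j (i ≠ j) in the JSBAF of AS₊. Then there exists a strict argument c of the form c : → φ (via a consequence-based rule from the empty set) belonging to 𝒜_i ∩ 𝒜_j ∩ 𝒜₊ that attacks a in the JSBAF of AS_i or attacks b in the JSBAF of AS_j. -/

import Mathlib

namespace ASPIC

/-- An underlying logical language: formulas, atoms, interpretations, a classical
negation and conjunction, and the interpolation-style assumption on syntactically
disjoint sets of formulas. -/
structure Logic where
  F : Type
  Atom : Type
  atoms : F → Set Atom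
  I : Type
  inhab : Nonempty I
  Models : I → F → Prop
  neg : F → F
  conj : F → F → F
  neg_spec : ∀ i φ, Models i (neg φ) ↔ ¬ Models i φ
  conj_spec : ∀ i φ ψ, Models i (conj φ ψ) ↔ (Models i φ ∧ Models i ψ)
  atoms_neg : ∀ φ, atoms (neg φ) = atoms φ
  atoms_conj : ∀ φ ψ, atoms (conj φ ψ) = atoms φ ∪ atoms ψ
  interp : ∀ Γ Δ : Set F, (∀ φ ∈ Γ, ∀ ψ ∈ Δ, atoms φ ∩ atoms ψ = ∅) →
    (∃ i, ∀ φ ∈ Γ, Models i φ) → (∃ i, ∀ ψ ∈ Δ, Models i ψ) →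
    (∃ i, (∀ φ ∈ Γ, Models i φ) ∧ (∀ ψ ∈ Δ, Models i ψ))

/-- The model-based consequence relation ⊨_C. -/
def Conseq (L : Logic) (Γ : Set L.F) (φ : L.F) : Prop :=
  ∀ i, (∀ ψ ∈ Γ, L.Models i ψ) → L.Models i φ

/-- φ = −ψ: one formula is the negation of the other. -/
def negOf (L : Logic) (φ ψ : L.F) : Prop := φ = L.neg ψ ∨ ψ = L.neg φ

/-- Conjunction of a nonempty list of formulas: conjL L φ [ψ₁,…] = φ ∧ ψ₁ ∧ … . -/
def conjL (L : Logic) : L.F → List L.F → L.F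
  | φ, [] => φ
  | φ, ψ :: l => L.conj φ (conjL L ψ l)

/-- A (defeasible) rule: antecedents and conclusion. -/
abbrev Rule (L : Logic) := List L.F × L.F

/-- An argumentation system of Deductive ASPIC⊖: satisfiable axioms, defeasible rules,
a (partial) naming function and a total preorder on defeasible rules.  The strict rules
are the axiomatic rules together with all consequence-based rules. -/
structure ASys (L : Logic) where
  AX : Set L.F
  AX_sat : ∃ i, ∀ φ ∈ AX, L.Models i φ
  Rd : Set (Rule L)
  name : Rule L → Option L.F
  rpref : Rule L → Rule L → Prop
  rpref_refl : ∀ r, rpref r r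
  rpref_trans : ∀ r s t, rpref r s → rpref s t → rpref r t
  rpref_total : ∀ r s, rpref r s ∨ rpref s r

/-- Top-rule kinds: axiomatic, consequence-based strict, defeasible. -/
inductive RK : Type
  | ax | cb | df
deriving DecidableEq

/-- Argument trees (with the kind of the top rule and the conclusion recorded). -/
inductive Arg (L : Logic) : Type
  | node (k : RK) (subs : List (Arg L)) (concl : L.F)

def Arg.concl {L : Logic} : Arg L → L.F
  | .node _ _ φ => φ

def Arg.subs {L : Logic} : Arg L → List (Arg L)
  | .node _ s _ => s

def Arg.kind {L : Logic} : Arg L → RK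
  | .node k _ _ => k

/-- Well-formed arguments of an argumentation system. -/
inductive Wf (L : Logic) (as : ASys L) : Arg L → Prop
  | ax (φ : L.F) (h : φ ∈ as.AX) : Wf L as (.node .ax [] φ)
  | cb (subs : List (Arg L)) (φ : L.F) (hs : ∀ a ∈ subs, Wf L as a)
      (h : Conseq L {ψ | ∃ a ∈ subs, Arg.concl a = ψ} φ) : Wf L as (.node .cb subs φ)
  | df (subs : List (Arg L)) (φ : L.F) (hs : ∀ a ∈ subs, Wf L as a)
      (h : (subs.map Arg.concl, φ) ∈ as.Rd) : Wf L as (.node .df subs φ)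

/-- Sub-argument relation: `Sub a b` means a is a sub-argument of b. -/
inductive Sub (L : Logic) : Arg L → Arg L → Prop
  | refl (a : Arg L) : Sub L a a
  | step (a b : Arg L) (k : RK) (subs : List (Arg L)) (φ : L.F)
      (hb : b ∈ subs) (h : Sub L a b) : Sub L a (.node k subs φ)

/-- Conclusions of the sub-arguments of a. -/
def SubC (L : Logic) (a : Arg L) : Set L.F := {φ | ∃ b, Sub L b a ∧ Arg.concl b = φ}

/-- Axiomatic and defeasible sub-arguments. -/
def ADSub (L : Logic) (a : Arg L) : Set (Arg L) := {b | Sub L b a ∧ Arg.kind b ≠ RK.cb}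

/-- Conclusions of the axiomatic and defeasible sub-arguments. -/
def ADSubC (L : Logic) (a : Arg L) : Set L.F :=
  {φ | ∃ b, Sub L b a ∧ Arg.kind b ≠ RK.cb ∧ Arg.concl b = φ}

/-- Defeasible rules used in an argument. -/
def DR (L : Logic) (a : Arg L) : Set (Rule L) :=
  {r | ∃ subs, Sub L (Arg.node RK.df subs r.2) a ∧ r.1 = subs.map Arg.concl}

/-- Strict arguments: no defeasible rules used. -/
def IsStrictArg (L : Logic) (a : Arg L) : Prop := DR L a = ∅

/-- Elitist weakest-link lifting of the rule preorder to arguments (a ⪯_ewl b). -/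
def ewl (L : Logic) (as : ASys L) (a b : Arg L) : Prop :=
  (DR L a = ∅ ∧ DR L b = ∅) ∨ ∃ ra ∈ DR L a, ∀ rb ∈ DR L b, as.rpref ra rb

/-- a undercuts b: the conclusion of a is the negation of the name of a defeasible rule
used in b. -/
def Undercuts (L : Logic) (as : ASys L) (a b : Arg L) : Prop :=
  ∃ subs φ, Sub L (Arg.node RK.df subs φ) b ∧
    ∃ nm, as.name (subs.map Arg.concl, φ) = some nm ∧ negOf L (Arg.concl a) nm

/-- a gen-rebuts b: b is defeasible and the conclusion of a is the negation of a conjunction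
of conclusions of sub-arguments of b. -/
def GenRebuts (L : Logic) (a b : Arg L) : Prop :=
  DR L b ≠ ∅ ∧ ∃ (φ : L.F) (l : List L.F),
    (∀ χ ∈ φ :: l, χ ∈ SubC L b) ∧ Arg.concl a = L.neg (conjL L φ l)

/-- a defeats b: a undercuts b, or a gen-rebuts b and a is not strictly weaker than b. -/
def Defeats (L : Logic) (as : ASys L) (a b : Arg L) : Prop :=
  Undercuts L as a b ∨
    (GenRebuts L a b ∧ ¬ (ewl L as a b ∧ ¬ ewl L as b a))

/-- The strict rules of an argumentation system: axiomatic or consequence-based. -/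
def StrictRule (L : Logic) (as : ASys L) (r : Rule L) : Prop :=
  (r.1 = [] ∧ r.2 ∈ as.AX) ∨ Conseq L {φ | φ ∈ r.1} r.2

end ASPIC

namespace ASPIC

/-- Atoms occurring in a rule. -/
def ruleAtoms (L : Logic) (r : Rule L) : Set L.Atom :=
  (⋃ φ ∈ r.1, L.atoms φ) ∪ L.atoms r.2

/-- Atoms of an argumentation system: atoms of its axioms, of its defeasible rules and of the
names of its defeasible rules. -/
def atomsOf (L : Logic) (as : ASys L) : Set L.Atom :=
  (⋃ φ ∈ as.AX, L.atoms φ) ∪ (⋃ r ∈ as.Rd, ruleAtoms L r) ∪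
    (⋃ r ∈ as.Rd, (as.name r).elim ∅ L.atoms)

/-- Syntactic disjointness of two argumentation systems. -/
def SynDisj (L : Logic) (as₁ as₂ : ASys L) : Prop :=
  atomsOf L as₁ ∩ atomsOf L as₂ = ∅

/-- asp is a union of as₁ and as₂. -/
structure IsUnion (L : Logic) (as₁ as₂ asp : ASys L) : Prop where
  ax : asp.AX = as₁.AX ∪ as₂.AX
  rd : asp.Rd = as₁.Rd ∪ as₂.Rd
  nm₁ : ∀ r ∈ as₁.Rd, asp.name r = as₁.name r
  nm₂ : ∀ r ∈ as₂.Rd, asp.name r = as₂.name r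
  rp₁ : ∀ r s, as₁.rpref r s → asp.rpref r s
  rp₂ : ∀ r s, as₂.rpref r s → asp.rpref r s

/-- A consistent argument: every subset of the conclusions of its sub-arguments is
satisfiable. -/
def ConsArg (L : Logic) (a : Arg L) : Prop :=
  ∀ Γ : Set L.F, Γ ⊆ SubC L a → ∃ i, ∀ φ ∈ Γ, L.Models i φ

/-- A tautology: satisfied by every interpretation. -/
def Taut (L : Logic) (φ : L.F) : Prop := ∀ i, L.Models i φ

end ASPIC

namespace ASPIC
variable {L : Logic}

theorem arg_ind {P : Arg L → Prop}
    (h : ∀ k subs φ, (∀ b ∈ subs, P b) → P (Arg.node k subs φ)) : ∀ a, P a :=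
  fun a => Arg.rec (motive_1 := fun a => P a) (motive_2 := fun l => ∀ b ∈ l, P b)
    (fun k subs φ ih => h k subs φ ih)
    (by simp)
    (fun c l ihc ihl => by
      intro b hb
      rcases List.mem_cons.mp hb with h1 | h1
      · exact h1 ▸ ihc
      · exact ihl b h1)
    a

mutual
def adList : Arg L → List L.F
  | .node k subs φ => (if k = RK.cb then [] else [φ]) ++ adListL subs
def adListL : List (Arg L) → List L.F
  | [] => []
  | a :: l => adList a ++ adListL l
end

end ASPIC
namespace ASPIC
variable {L : Logic}

theorem sub_trans {a b c : Arg L} (h1 : Sub L a b) (h2 : Sub L b c) : Sub L a c := by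
  induction h2 with
  | refl => exact h1
  | step b' k subs φ hb h ih => exact Sub.step _ _ _ _ _ hb ih

theorem adsubc_mono {a b : Arg L} (h : Sub L b a) : ADSubC L b ⊆ ADSubC L a := by
  rintro φ ⟨c, hc, hk, he⟩
  exact ⟨c, sub_trans hc h, hk, he⟩

theorem wf_sub {as : ASys L} {a b : Arg L} (h : Sub L b a) (hw : Wf L as a) : Wf L as b := by
  induction h with
  | refl => exact hw
  | step b' k subs φ hb h ih =>
    apply ih
    cases hw with
    | ax _ _ => exact absurd hb List.not_mem_nil
    | cb _ _ hs _ => exact hs _ hb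
    | df _ _ hs _ => exact hs _ hb

theorem conseq_sub {as : ASys L} {a : Arg L} (hw : Wf L as a) :
    ∀ c, Sub L c a → Conseq L (ADSubC L a) (Arg.concl c) := by
  induction hw with
  | ax φ h =>
    intro c hc
    cases hc with
    | refl => exact fun i hi => hi _ ⟨_, Sub.refl _, by simp [Arg.kind], rfl⟩
    | step _ _ _ _ hb _ => exact absurd hb List.not_mem_nil
  | cb subs φ hs h ih =>
    intro c hc
    cases hc with
    | refl =>
      intro i hi
      apply h
      rintro ψ ⟨x, hx, rfl⟩
      exact ih x hx x (Sub.refl x) i fun χ hχ =>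
        hi χ (adsubc_mono (Sub.step _ _ _ _ _ hx (Sub.refl x)) hχ)
    | step b _ _ _ hb hsub =>
      intro i hi
      exact ih b hb c hsub i fun χ hχ =>
        hi χ (adsubc_mono (Sub.step _ _ _ _ _ hb (Sub.refl b)) hχ)
  | df subs φ hs h ih =>
    intro c hc
    cases hc with
    | refl => exact fun i hi => hi _ ⟨_, Sub.refl _, by simp [Arg.kind], rfl⟩
    | step b _ _ _ hb hsub =>
      intro i hi
      exact ih b hb c hsub i fun χ hχ =>
        hi χ (adsubc_mono (Sub.step _ _ _ _ _ hb (Sub.refl b)) hχ)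

theorem atoms_adsub {as : ASys L} {a : Arg L} (hw : Wf L as a) :
    ∀ φ ∈ ADSubC L a, L.atoms φ ⊆ atomsOf L as := by
  rintro φ ⟨b, hb, hk, rfl⟩
  have hwb := wf_sub hb hw
  cases hwb with
  | ax ψ h =>
    intro x hx
    exact Or.inl (Or.inl (Set.mem_biUnion h hx))
  | cb subs ψ hs h => exact absurd rfl hk
  | df subs ψ hs h =>
    intro x hx
    refine Or.inl (Or.inr (Set.mem_biUnion h ?_))
    exact Or.inr hx

theorem models_conjL {i : L.I} {φ : L.F} {l : List L.F} :
    L.Models i (conjL L φ l) ↔ ∀ χ ∈ φ :: l, L.Models i χ := by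
  induction l generalizing φ with
  | nil => simp [conjL]
  | cons ψ l ih =>
    simp only [conjL, L.conj_spec, ih]
    constructor
    · rintro ⟨h1, h2⟩ χ hχ
      rcases List.mem_cons.mp hχ with rfl | hχ
      · exact h1
      · exact h2 χ hχ
    · intro h
      exact ⟨h φ (by simp), fun χ hχ => h χ (List.mem_cons_of_mem _ hχ)⟩

end ASPIC
namespace ASPIC
variable {L : Logic}

theorem sub_inv {c : Arg L} {k subs φ} (h : Sub L c (.node k subs φ)) :
    c = .node k subs φ ∨ ∃ b ∈ subs, Sub L c b := by
  cases h with
  | refl => exact Or.inl rfl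
  | step b _ _ _ hb hs => exact Or.inr ⟨b, hb, hs⟩

theorem mem_adList {χ : L.F} : ∀ {a : Arg L}, χ ∈ adList a ↔ χ ∈ ADSubC L a := by
  have : ∀ a : Arg L, χ ∈ adList a ↔ χ ∈ ADSubC L a := by
    apply arg_ind
    intro k subs φ ih
    constructor
    · intro h
      simp only [adList, List.mem_append] at h
      rcases h with h | h
      · rcases Decidable.em (k = RK.cb) with hk | hk
        · simp [hk] at h
        · simp [hk] at h
          exact ⟨.node k subs φ, Sub.refl _, by simpa [Arg.kind] using hk, by simp [Arg.concl, h]⟩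
      · -- χ ∈ adListL subs
        have : ∃ b ∈ subs, χ ∈ adList b := by
          clear ih
          induction subs with
          | nil => simp [adListL] at h
          | cons x l ihl =>
            simp only [adListL, List.mem_append] at h
            rcases h with h | h
            · exact ⟨x, by simp, h⟩
            · obtain ⟨b, hb, hχ⟩ := ihl h
              exact ⟨b, List.mem_cons_of_mem _ hb, hχ⟩
        obtain ⟨b, hb, hχ⟩ := this
        obtain ⟨c, hc, hk, he⟩ := (ih b hb).mp hχ
        exact ⟨c, Sub.step _ _ _ _ _ hb hc, hk, he⟩
    · rintro ⟨c, hc, hk, rfl⟩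
      rcases sub_inv hc with rfl | ⟨b, hb, hcb⟩
      · have : k ≠ RK.cb := by simpa [Arg.kind] using hk
        simp [adList, this, Arg.concl]
      · have : Arg.concl c ∈ adList b := (ih b hb).mpr ⟨c, hcb, hk, rfl⟩
        have hmem : Arg.concl c ∈ adListL subs := by
          clear ih hc
          induction subs with
          | nil => exact absurd hb List.not_mem_nil
          | cons x l ihl =>
            simp only [adListL, List.mem_append]
            rcases List.mem_cons.mp hb with rfl | hb'
            · exact Or.inl this
            · exact Or.inr (ihl hb')
        simp [adList, hmem]
  intro a
  exact this a

theorem DR_cbnil {φ : L.F} : DR L (Arg.node RK.cb [] φ) = ∅ := by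
  ext r
  simp only [DR, Set.mem_setOf_eq, Set.mem_empty_iff_false, iff_false, not_exists]
  rintro subs ⟨h, -⟩
  rcases sub_inv h with h | ⟨b, hb, -⟩
  · cases h
  · exact absurd hb List.not_mem_nil

theorem adsub_ax_of_DR_empty {as : ASys L} {a : Arg L} (hw : Wf L as a)
    (hdr : DR L a = ∅) : ADSubC L a ⊆ as.AX := by
  rintro φ ⟨b, hb, hk, rfl⟩
  have hwb := wf_sub hb hw
  cases hwb with
  | ax ψ h => exact h
  | cb subs ψ hs h => exact absurd rfl hk
  | df subs ψ hs h =>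
    exfalso
    have : (subs.map Arg.concl, ψ) ∈ DR L a := ⟨subs, hb, rfl⟩
    rw [hdr] at this
    exact this

theorem wf_cbnil_of_taut {as : ASys L} {φ : L.F} (h : Taut L φ) :
    Wf L as (Arg.node RK.cb [] φ) := by
  refine Wf.cb [] φ (by simp) ?_
  intro i _
  exact h i

theorem strict_defeats_of_genrebuts {as : ASys L} {c a : Arg L}
    (hc : DR L c = ∅) (hg : GenRebuts L c a) : Defeats L as c a := by
  refine Or.inr ⟨hg, ?_⟩
  rintro ⟨-, hne⟩
  apply hne
  obtain ⟨ra, hra⟩ := Set.nonempty_iff_ne_empty.mpr hg.1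
  exact Or.inr ⟨ra, hra, fun rb hrb => by rw [hc] at hrb; exact absurd hrb (Set.notMem_empty _)⟩

end ASPIC

namespace ASPIC
variable {L : Logic}

theorem counter_of_unsat {as : ASys L} {a : Arg L} (hw : Wf L as a)
    (hun : ¬ ∃ i, ∀ χ ∈ adList a, L.Models i χ) :
    ∃ φ : L.F, Taut L φ ∧ GenRebuts L (Arg.node RK.cb [] φ) a := by
  obtain ⟨i0⟩ := L.inhab
  rcases hl : adList a with - | ⟨φ, l⟩
  · exact absurd ⟨i0, fun χ hχ => by rw [hl] at hχ; exact absurd hχ List.not_mem_nil⟩ hun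
  · refine ⟨L.neg (conjL L φ l), ?_, ?_, φ, l, ?_, rfl⟩
    · intro i
      rw [L.neg_spec]
      intro hm
      exact hun ⟨i, fun χ hχ => models_conjL.mp hm χ (hl ▸ hχ)⟩
    · intro hdr
      apply hun
      obtain ⟨i, hi⟩ := as.AX_sat
      exact ⟨i, fun χ hχ => hi χ (adsub_ax_of_DR_empty hw hdr (mem_adList.mp hχ))⟩
    · intro χ hχ
      have : χ ∈ ADSubC L a := mem_adList.mp (by rw [hl]; exact hχ)
      obtain ⟨c, hc, -, he⟩ := this
      exact ⟨c, hc, he⟩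

theorem atoms_name {as : ASys L} {r : Rule L} {nm : L.F} (hr : r ∈ as.Rd)
    (hn : as.name r = some nm) : L.atoms nm ⊆ atomsOf L as := by
  intro x hx
  refine Or.inr (Set.mem_biUnion hr ?_)
  rw [hn]
  exact hx

theorem pair_disj {S T : Set L.Atom} (h : S ∩ T = ∅) {φ ψ : L.F}
    (h1 : L.atoms φ ⊆ S) (h2 : L.atoms ψ ⊆ T) : L.atoms φ ∩ L.atoms ψ = ∅ := by
  rw [Set.eq_empty_iff_forall_notMem]
  rintro x ⟨hx1, hx2⟩
  exact Set.eq_empty_iff_forall_notMem.mp h x ⟨h1 hx1, h2 hx2⟩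

theorem sat_adsubc {a : Arg L} (h : ∃ i, ∀ χ ∈ adList a, L.Models i χ) :
    ∃ i, ∀ χ ∈ ADSubC L a, L.Models i χ := by
  obtain ⟨i, hi⟩ := h
  exact ⟨i, fun χ hχ => hi χ (mem_adList.mpr hχ)⟩

end ASPIC

open ASPIC in
/-- If a ∈ 𝒜₁ attacks b ∈ 𝒜₂ in the JSBAF of the union AS₊ of two syntactically
disjoint argumentation systems, then there exists a strict argument c : → φ (a consequence-based
rule with no antecedents), well formed in AS₁, AS₂ and AS₊, which defeats a in AS₁ or defeats b
in AS₂. -/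
theorem cross_attack_strict_counterattack (L : Logic) (as₁ as₂ asp : ASys L)
    (hdisj : SynDisj L as₁ as₂) (hU : IsUnion L as₁ as₂ asp)
    (a b : Arg L) (ha : Wf L as₁ a) (hb : Wf L as₂ b)
    (hatt : Defeats L asp a b) :
    ∃ φ : L.F,
      Wf L as₁ (Arg.node RK.cb [] φ) ∧
      Wf L as₂ (Arg.node RK.cb [] φ) ∧
      Wf L asp (Arg.node RK.cb [] φ) ∧
      (Defeats L as₁ (Arg.node RK.cb [] φ) a ∨ Defeats L as₂ (Arg.node RK.cb [] φ) b) := by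
  by_cases hsa : ∃ i, ∀ χ ∈ adList a, L.Models i χ
  · by_cases hsb : ∃ i, ∀ χ ∈ adList b, L.Models i χ
    · rcases hatt with ⟨subs, ψr, hSub, nm, hname, hneg⟩ | ⟨⟨hdrb, φ, l, hmem, hconc⟩, -⟩
      · -- undercut case
        have hwr : Wf L as₂ (Arg.node RK.df subs ψr) := wf_sub hSub hb
        have hrRd : (subs.map Arg.concl, ψr) ∈ as₂.Rd := by
          cases hwr with
          | df _ _ _ h => exact h
        have hn2 : as₂.name (subs.map Arg.concl, ψr) = some nm := by
          rw [← hU.nm₂ _ hrRd]; exact hname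
        by_cases hnm : ∃ i, L.Models i nm
        · exfalso
          obtain ⟨i, hiA, hiN⟩ := L.interp (ADSubC L a) {nm}
            (fun φ hφ ψ hψ => pair_disj hdisj (atoms_adsub ha φ hφ)
              (by rw [Set.mem_singleton_iff] at hψ; exact hψ ▸ atoms_name hrRd hn2))
            (sat_adsubc hsa)
            ⟨hnm.choose, fun ψ hψ => by rw [Set.mem_singleton_iff] at hψ; exact hψ ▸ hnm.choose_spec⟩
          have hca := conseq_sub ha a (Sub.refl a) i hiA
          have hn := hiN nm rfl
          rcases hneg with h | h
          · rw [h, L.neg_spec] at hca; exact hca hn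
          · rw [h, L.neg_spec] at hn; exact hn hca
        · have htaut : Taut L (L.neg nm) := fun i => (L.neg_spec i nm).mpr (fun h => hnm ⟨i, h⟩)
          exact ⟨L.neg nm, wf_cbnil_of_taut htaut, wf_cbnil_of_taut htaut, wf_cbnil_of_taut htaut,
            Or.inr (Or.inl ⟨subs, ψr, hSub, nm, hn2, Or.inl rfl⟩)⟩
      · -- gen-rebut case
        exfalso
        obtain ⟨i, hiA, hiB⟩ := L.interp (ADSubC L a) (ADSubC L b)
          (fun φ hφ ψ hψ => pair_disj hdisj (atoms_adsub ha φ hφ) (atoms_adsub hb ψ hψ))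
          (sat_adsubc hsa) (sat_adsubc hsb)
        have hca := conseq_sub ha a (Sub.refl a) i hiA
        rw [hconc, L.neg_spec] at hca
        apply hca
        rw [models_conjL]
        intro χ hχ
        obtain ⟨c', hc', rfl⟩ := hmem χ hχ
        exact conseq_sub hb c' hc' i hiB
    · obtain ⟨φ, ht, hg⟩ := counter_of_unsat hb hsb
      exact ⟨φ, wf_cbnil_of_taut ht, wf_cbnil_of_taut ht, wf_cbnil_of_taut ht,
        Or.inr (strict_defeats_of_genrebuts DR_cbnil hg)⟩
  · obtain ⟨φ, ht, hg⟩ := counter_of_unsat ha hsa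
    exact ⟨φ, wf_cbnil_of_taut ht, wf_cbnil_of_taut ht, wf_cbnil_of_taut ht,
      Or.inl (strict_defeats_of_genrebuts DR_cbnil hg)⟩
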